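/- arXiv:1804.03077 — 6 statements merged into one kernel-verified Lean document; each statement's English description precedes it below -/
import Mathlib

section
/- (Theorem 1(i)) If q < b/(a+b), then H_q minimizes the expected misclassification cost L_{a,b} among all RDCs with predicted positive rate at least α: for every RDC H with E[H] ≥ α, L_{a,b}(H_q) ≤ L_{a,b}(H). -/
open MeasureTheory Set

/-- A randomized decision classifier (RDC): an `ℋ`-measurable random variable
with values in the unit interval. -/
def IsRDC {Ω : Type*} (ℋ : MeasurableSpace Ω) (H : Ω → ℝ) : Prop :=
  Measurable[ℋ] H ∧ ∀ ω, H ω ∈ Set.Icc (0 : ℝ) 1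

/-- The optimal RDC `H_q` obtained by thresholding the posterior probability `η` at `q`,
with randomization on the event `{η = q}` calibrated so that the predicted positive
rate equals `α`. -/
noncomputable def Hq {Ω : Type*} [MeasurableSpace Ω] (P : Measure Ω) (η : Ω → ℝ)
    (α q : ℝ) : Ω → ℝ := fun ω =>
  if P {ω' | η ω' = q} = 0 then {ω' | η ω' > q}.indicator (fun _ => (1 : ℝ)) ω
  else {ω' | η ω' > q}.indicator (fun _ => (1 : ℝ)) ω +
    ((α - (P {ω' | η ω' > q}).toReal) / (P {ω' | η ω' = q}).toReal) *
      {ω' | η ω' = q}.indicator (fun _ => (1 : ℝ)) ω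

/-- Expected misclassification cost `L_{a,b}(H) = a·E[(1−H)·1_A] + b·E[H·1_{Aᶜ}]`. -/
noncomputable def cost {Ω : Type*} [MeasurableSpace Ω] (P : Measure Ω) (A : Set Ω)
    (a b : ℝ) (H : Ω → ℝ) : ℝ :=
  a * ∫ ω, (1 - H ω) * A.indicator (fun _ => (1 : ℝ)) ω ∂P +
    b * ∫ ω, H ω * Aᶜ.indicator (fun _ => (1 : ℝ)) ω ∂P


private lemma integrable_of_bdd {Ω : Type*} [MeasurableSpace Ω] (P : Measure Ω)
    [IsFiniteMeasure P] {f : Ω → ℝ} (hf : Measurable f) {C : ℝ}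
    (h : ∀ ω, |f ω| ≤ C) : Integrable f P :=
  (integrable_const C).mono' hf.aestronglyMeasurable
    (Filter.Eventually.of_forall fun ω => by simpa using h ω)

/-- Theorem 1(i). If `q < b/(a+b)` then `H_q` minimizes the
expected misclassification cost among all RDCs with predicted positive rate at least `α`. -/
theorem Hq_min_cost_of_rate_ge
    {Ω : Type*} (ℋ : MeasurableSpace Ω) [𝒜 : MeasurableSpace Ω]
    (P : Measure Ω) [IsProbabilityMeasure P] (hℋ : ℋ ≤ 𝒜)
    (A : Set Ω) (hA : MeasurableSet A) (hA0 : 0 < P A) (hA1 : P A < 1)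
    (hAH : ¬ MeasurableSet[ℋ] A)
    (η : Ω → ℝ) (hηm : Measurable[ℋ] η) (hη01 : ∀ ω, η ω ∈ Set.Icc (0 : ℝ) 1)
    (hηcond : ∀ Z : Ω → ℝ, Measurable[ℋ] Z → (∃ C, ∀ ω, |Z ω| ≤ C) →
      ∫ ω, η ω * Z ω ∂P = ∫ ω, A.indicator (fun _ => (1 : ℝ)) ω * Z ω ∂P)
    (α : ℝ) (hα : α ∈ Set.Ioo (0 : ℝ) 1)
    (q : ℝ) (hq₁ : (P {ω | η ω < q}).toReal ≤ 1 - α)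
    (hq₂ : 1 - α ≤ (P {ω | η ω ≤ q}).toReal)
    (a b : ℝ) (ha : 0 ≤ a) (hb : 0 ≤ b) (hab : 0 < a + b)
    (hqlt : q < b / (a + b)) :
    ∀ H : Ω → ℝ, IsRDC ℋ H → α ≤ ∫ ω, H ω ∂P →
      cost P A a b (Hq P η α q) ≤ cost P A a b H := by
  intro H hH hHα
  obtain ⟨hHm, hH01⟩ := hH
  set g := Hq P η α q with hgdef
  have hSℋ : MeasurableSet[ℋ] {ω' | η ω' > q} := measurableSet_lt measurable_const hηm
  have hTℋ : MeasurableSet[ℋ] {ω' | η ω' = q} := hηm (measurableSet_singleton q)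
  have hS : MeasurableSet {ω' | η ω' > q} := hℋ _ hSℋ
  have hT : MeasurableSet {ω' | η ω' = q} := hℋ _ hTℋ
  have hfin : ∀ s : Set Ω, P s ≠ ⊤ := fun s => measure_ne_top P s
  have hind : ∀ (s : Set Ω) (ω : Ω), |s.indicator (fun _ => (1 : ℝ)) ω| ≤ 1 := by
    intro s ω; by_cases h : ω ∈ s <;> simp [h]
  -- measure arithmetic
  have hsum : P {ω' | η ω' > q} + P {ω' | η ω' ≤ q} = 1 := by
    have h0 := measure_add_measure_compl (μ := P) hS
    have hc : {ω' | η ω' > q}ᶜ = {ω' | η ω' ≤ q} := by ext ω; simp [not_lt]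
    rwa [hc, measure_univ] at h0
  have hsplit : P {ω' | η ω' < q} + P {ω' | η ω' = q} = P {ω' | η ω' ≤ q} := by
    have hu : {ω' | η ω' < q} ∪ {ω' | η ω' = q} = {ω' | η ω' ≤ q} := by
      ext ω; simp [le_iff_lt_or_eq]
    rw [← hu]
    exact (measure_union (Set.disjoint_left.mpr fun ω h1 h2 => absurd h2 (ne_of_lt h1)) hT).symm
  have h1 : (P {ω' | η ω' > q}).toReal + (P {ω' | η ω' ≤ q}).toReal = 1 := by
    rw [← ENNReal.toReal_add (hfin _) (hfin _), hsum, ENNReal.toReal_one]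
  have h2 : (P {ω' | η ω' < q}).toReal + (P {ω' | η ω' = q}).toReal
      = (P {ω' | η ω' ≤ q}).toReal := by
    rw [← ENNReal.toReal_add (hfin _) (hfin _), hsplit]
  -- properties of the optimal classifier g
  obtain ⟨hgm, ⟨Cg, hgC⟩, hgα, hglt, hggt⟩ :
      Measurable[ℋ] g ∧ (∃ C, ∀ ω, |g ω| ≤ C) ∧ (∫ ω, g ω ∂P) = α ∧
        (∀ ω, η ω < q → g ω = 0) ∧ (∀ ω, q < η ω → g ω = 1) := by
    by_cases hT0 : P {ω' | η ω' = q} = 0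
    · have hgeq : g = {ω' | η ω' > q}.indicator (fun _ => (1 : ℝ)) := by
        funext ω; simp [hgdef, Hq, hT0]
      have hT0' : (P {ω' | η ω' = q}).toReal = 0 := by simp [hT0]
      refine ⟨?_, ⟨1, ?_⟩, ?_, ?_, ?_⟩
      · rw [hgeq]; exact measurable_const.indicator hSℋ
      · intro ω; rw [hgeq]; exact hind _ ω
      · rw [hgeq, integral_indicator_const (1 : ℝ) hS, smul_eq_mul, mul_one]
        rw [measureReal_def]; linarith [hq₁, hq₂]
      · intro ω h; rw [hgeq]
        simp only [Set.indicator_apply, Set.mem_setOf_eq, if_neg (lt_asymm h)]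
      · intro ω h; rw [hgeq]
        simp only [Set.indicator_apply, Set.mem_setOf_eq, if_pos h]
    · set lam := (α - (P {ω' | η ω' > q}).toReal) / (P {ω' | η ω' = q}).toReal with hlam
      have hgeq : g = fun ω => {ω' | η ω' > q}.indicator (fun _ => (1 : ℝ)) ω
          + lam * {ω' | η ω' = q}.indicator (fun _ => (1 : ℝ)) ω := by
        funext ω; simp [hgdef, Hq, hT0, hlam]
      have hPT : (P {ω' | η ω' = q}).toReal ≠ 0 :=
        ENNReal.toReal_ne_zero.mpr ⟨hT0, hfin _⟩
      refine ⟨?_, ⟨1 + |lam|, ?_⟩, ?_, ?_, ?_⟩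
      · rw [hgeq]
        exact (measurable_const.indicator hSℋ).add
          ((measurable_const.indicator hTℋ).const_mul lam)
      · intro ω; rw [hgeq]
        have h3 := abs_add_le ({ω' | η ω' > q}.indicator (fun _ => (1 : ℝ)) ω)
          (lam * {ω' | η ω' = q}.indicator (fun _ => (1 : ℝ)) ω)
        have h4 : |lam * {ω' | η ω' = q}.indicator (fun _ => (1 : ℝ)) ω| ≤ |lam| := by
          rw [abs_mul]
          nlinarith [hind {ω' | η ω' = q} ω, abs_nonneg lam,
            abs_nonneg ({ω' | η ω' = q}.indicator (fun _ => (1 : ℝ)) ω)]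
        have h5 := hind {ω' | η ω' > q} ω
        calc |({ω' | η ω' > q}.indicator (fun _ => (1 : ℝ)) ω
              + lam * {ω' | η ω' = q}.indicator (fun _ => (1 : ℝ)) ω)| ≤ _ := h3
          _ ≤ 1 + |lam| := by linarith
      · rw [hgeq, integral_add (((integrable_const (1 : ℝ)).indicator hS))
          (((integrable_const (1 : ℝ)).indicator hT).const_mul lam),
          integral_const_mul, integral_indicator_const (1 : ℝ) hS,
          integral_indicator_const (1 : ℝ) hT, smul_eq_mul, smul_eq_mul, mul_one, mul_one, measureReal_def, measureReal_def,
          hlam, div_mul_cancel₀ _ hPT]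
        ring
      · intro ω h; rw [hgeq]
        simp only [Set.indicator_apply, Set.mem_setOf_eq, if_neg (lt_asymm h),
          if_neg (ne_of_lt h)]
        ring
      · intro ω h; rw [hgeq]
        simp only [Set.indicator_apply, Set.mem_setOf_eq, if_pos h,
          if_neg (ne_of_gt h)]
        ring
  -- cost expansion
  have hηb : ∀ ω, |η ω| ≤ 1 := fun ω =>
    abs_le.mpr ⟨by linarith [(hη01 ω).1], (hη01 ω).2⟩
  have hηm' : Measurable η := hηm.mono hℋ le_rfl
  have miA : Measurable (A.indicator (fun _ => (1 : ℝ))) := measurable_const.indicator hA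
  have int_iA : Integrable (A.indicator fun _ => (1 : ℝ)) P :=
    integrable_of_bdd P miA (hind A)
  have costF : ∀ F : Ω → ℝ, Measurable[ℋ] F → (∀ ω, |F ω| ≤ |Cg| + 1) →
      cost P A a b F = a * (P A).toReal + b * (∫ ω, F ω ∂P)
        - (a + b) * (∫ ω, η ω * F ω ∂P) := by
    intro F hFm hFC
    have hFm' : Measurable F := hFm.mono hℋ le_rfl
    have intF : Integrable F P := integrable_of_bdd P hFm' hFC
    have hFAb : ∀ ω, |F ω * A.indicator (fun _ => (1 : ℝ)) ω| ≤ |Cg| + 1 := by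
      intro ω; rw [abs_mul]
      nlinarith [hFC ω, hind A ω, abs_nonneg (F ω),
        abs_nonneg (A.indicator (fun _ => (1 : ℝ)) ω)]
    have intFA : Integrable (fun ω => F ω * A.indicator (fun _ => (1 : ℝ)) ω) P :=
      integrable_of_bdd P (hFm'.mul miA) hFAb
    have hcond := hηcond F hFm ⟨|Cg| + 1, hFC⟩
    have e1 : ∫ ω, (1 - F ω) * A.indicator (fun _ => (1 : ℝ)) ω ∂P
        = (P A).toReal - ∫ ω, F ω * A.indicator (fun _ => (1 : ℝ)) ω ∂P := by
      have hpt : ∀ ω, (1 - F ω) * A.indicator (fun _ => (1 : ℝ)) ω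
          = A.indicator (fun _ => (1 : ℝ)) ω - F ω * A.indicator (fun _ => (1 : ℝ)) ω :=
        fun ω => by ring
      simp only [hpt]
      rw [integral_sub int_iA intFA, integral_indicator_const (1 : ℝ) hA, smul_eq_mul,
        mul_one, measureReal_def]
    have e2 : ∫ ω, F ω * Aᶜ.indicator (fun _ => (1 : ℝ)) ω ∂P
        = (∫ ω, F ω ∂P) - ∫ ω, F ω * A.indicator (fun _ => (1 : ℝ)) ω ∂P := by
      have hpt : ∀ ω, F ω * Aᶜ.indicator (fun _ => (1 : ℝ)) ω
          = F ω - F ω * A.indicator (fun _ => (1 : ℝ)) ω := by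
        intro ω; by_cases h : ω ∈ A <;> simp [h]
      simp only [hpt]
      rw [integral_sub intF intFA]
    have e3 : ∫ ω, η ω * F ω ∂P = ∫ ω, F ω * A.indicator (fun _ => (1 : ℝ)) ω ∂P := by
      rw [hcond]
      exact integral_congr_ae (Filter.Eventually.of_forall fun ω => mul_comm _ _)
    simp only [cost, e1, e2, e3]
    ring
  have hgm' : Measurable g := hgm.mono hℋ le_rfl
  have hHm' : Measurable H := hHm.mono hℋ le_rfl
  have hHb : ∀ ω, |H ω| ≤ |Cg| + 1 := fun ω => by
    have := abs_le.mpr ⟨by linarith [(hH01 ω).1], (hH01 ω).2⟩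
    have := abs_nonneg Cg; linarith
  have hgb : ∀ ω, |g ω| ≤ |Cg| + 1 := fun ω => by
    have := hgC ω; have := le_abs_self Cg; linarith
  have intg : Integrable g P := integrable_of_bdd P hgm' hgb
  have intH : Integrable H P := integrable_of_bdd P hHm' hHb
  have int_ηg : Integrable (fun ω => η ω * g ω) P := by
    refine integrable_of_bdd P (hηm'.mul hgm') (C := |Cg| + 1) fun ω => ?_
    rw [abs_mul]
    nlinarith [hηb ω, hgb ω, abs_nonneg (η ω), abs_nonneg (g ω)]
  have int_ηH : Integrable (fun ω => η ω * H ω) P := by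
    refine integrable_of_bdd P (hηm'.mul hHm') (C := |Cg| + 1) fun ω => ?_
    rw [abs_mul]
    nlinarith [hηb ω, hHb ω, abs_nonneg (η ω), abs_nonneg (H ω)]
  rw [costF g hgm hgb, costF H hHm hHb, hgα]
  have hkey : q * (α - ∫ ω, H ω ∂P)
      ≤ (∫ ω, η ω * g ω ∂P) - ∫ ω, η ω * H ω ∂P := by
    have hD : ∀ ω, (g ω - H ω) * (q - η ω) ≤ 0 := by
      intro ω
      rcases lt_trichotomy (η ω) q with h | h | h
      · have := hglt ω h
        have := (hH01 ω).1
        nlinarith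
      · simp [h]
      · have := hggt ω h
        have := (hH01 ω).2
        nlinarith
    have hint : ∫ ω, (g ω - H ω) * (q - η ω) ∂P ≤ 0 := integral_nonpos hD
    have hexp : ∫ ω, (g ω - H ω) * (q - η ω) ∂P
        = q * ((∫ ω, g ω ∂P) - ∫ ω, H ω ∂P)
          - ((∫ ω, η ω * g ω ∂P) - ∫ ω, η ω * H ω ∂P) := by
      have hpt : ∀ ω, (g ω - H ω) * (q - η ω)
          = (q * g ω - q * H ω) - (η ω * g ω - η ω * H ω) := fun ω => by ring
      have i1 : Integrable (fun ω => q * g ω - q * H ω) P :=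
        (intg.const_mul q).sub (intH.const_mul q)
      have i2 : Integrable (fun ω => η ω * g ω - η ω * H ω) P := int_ηg.sub int_ηH
      simp only [hpt]
      rw [integral_sub i1 i2, integral_sub (intg.const_mul q) (intH.const_mul q),
        integral_sub int_ηg int_ηH, integral_const_mul, integral_const_mul]
      ring
    rw [hexp, hgα] at hint
    linarith
  have hq3 : q * (a + b) < b := (lt_div_iff₀ hab).mp hqlt
  nlinarith [mul_le_mul_of_nonneg_left hkey hab.le,
    mul_nonneg (sub_nonneg.mpr hq3.le) (sub_nonneg.mpr hHα)]
end

section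
/- (Key inequality from the proof of Theorem 1) For every RDC H, L_{a,b}(H) ≥ a·P[A] + (b − (a+b)·q)·E[H] + (a+b)·E[(q − η)·H_q]. -/
open MeasureTheory Set

/-- key inequality from the proof of Theorem 1. For every RDC `H`,
`L_{a,b}(H) ≥ a·P[A] + (b − (a+b)q)·E[H] + (a+b)·E[(q − η)·H_q]`. -/
theorem cost_key_inequality
    {Ω : Type*} (ℋ : MeasurableSpace Ω) [𝒜 : MeasurableSpace Ω]
    (P : Measure Ω) [IsProbabilityMeasure P] (hℋ : ℋ ≤ 𝒜)
    (A : Set Ω) (hA : MeasurableSet A) (hA0 : 0 < P A) (hA1 : P A < 1)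
    (hAH : ¬ MeasurableSet[ℋ] A)
    (η : Ω → ℝ) (hηm : Measurable[ℋ] η) (hη01 : ∀ ω, η ω ∈ Set.Icc (0 : ℝ) 1)
    (hηcond : ∀ Z : Ω → ℝ, Measurable[ℋ] Z → (∃ C, ∀ ω, |Z ω| ≤ C) →
      ∫ ω, η ω * Z ω ∂P = ∫ ω, A.indicator (fun _ => (1 : ℝ)) ω * Z ω ∂P)
    (α : ℝ) (hα : α ∈ Set.Ioo (0 : ℝ) 1)
    (q : ℝ) (hq₁ : (P {ω | η ω < q}).toReal ≤ 1 - α)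
    (hq₂ : 1 - α ≤ (P {ω | η ω ≤ q}).toReal)
    (a b : ℝ) (ha : 0 ≤ a) (hb : 0 ≤ b) (hab : 0 < a + b)
 :
    ∀ H : Ω → ℝ, IsRDC ℋ H →
      a * (P A).toReal + (b - (a + b) * q) * ∫ ω, H ω ∂P
          + (a + b) * ∫ ω, (q - η ω) * Hq P η α q ω ∂P
        ≤ cost P A a b H := by
  intro H hH
  obtain ⟨hHm, hH01⟩ := hH
  have hHM : Measurable H := hHm.mono hℋ le_rfl
  have hηM : Measurable η := hηm.mono hℋ le_rfl
  have hSq : MeasurableSet {ω' | η ω' > q} := hηM measurableSet_Ioi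
  have intg : ∀ (f : Ω → ℝ), Measurable f → ∀ C : ℝ, (∀ ω, |f ω| ≤ C) →
      Integrable f P := fun f hf C hC =>
    (integrable_const C).mono' hf.aestronglyMeasurable
      (ae_of_all _ fun ω => by simpa using hC ω)
  have hHb : ∀ ω, |H ω| ≤ 1 := fun ω =>
    abs_le.mpr ⟨by linarith [(hH01 ω).1], (hH01 ω).2⟩
  have hηb : ∀ ω, |η ω| ≤ 1 := fun ω =>
    abs_le.mpr ⟨by linarith [(hη01 ω).1], (hη01 ω).2⟩
  have hind : ∀ (s : Set Ω) (ω : Ω), |s.indicator (fun _ => (1 : ℝ)) ω| ≤ 1 := by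
    intro s ω; by_cases h : ω ∈ s <;> simp [Set.indicator_apply, h]
  have hindm : Measurable (A.indicator (fun _ => (1 : ℝ))) :=
    measurable_const.indicator hA
  -- integrabilities
  have intH : Integrable H P := intg H hHM 1 hHb
  have intηH : Integrable (fun ω => η ω * H ω) P :=
    intg _ (hηM.mul hHM) 1 (fun ω => by
      rw [abs_mul]
      calc |η ω| * |H ω| ≤ 1 * 1 :=
            mul_le_mul (hηb ω) (hHb ω) (abs_nonneg _) zero_le_one
        _ = 1 := by ring)
  have int1A : Integrable (A.indicator (fun _ => (1 : ℝ))) P := intg _ hindm 1 (hind A)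
  have intH1A : Integrable (fun ω => H ω * A.indicator (fun _ => (1 : ℝ)) ω) P :=
    intg _ (hHM.mul hindm) 1 (fun ω => by
      rw [abs_mul]
      calc |H ω| * |A.indicator (fun _ => (1:ℝ)) ω| ≤ 1 * 1 :=
            mul_le_mul (hHb ω) (hind A ω) (abs_nonneg _) zero_le_one
        _ = 1 := by ring)
  have intqηq : Integrable (fun ω => (q - η ω) * {ω' | η ω' > q}.indicator (fun _ => (1:ℝ)) ω) P :=
    intg _ ((measurable_const.sub hηM).mul (measurable_const.indicator hSq)) (|q| + 1)
      (fun ω => by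
        rw [abs_mul]
        calc |q - η ω| * |_| ≤ (|q| + 1) * 1 := by
              apply mul_le_mul _ (hind _ ω) (abs_nonneg _) (by positivity)
              calc |q - η ω| ≤ |q| + |η ω| := abs_sub _ _
                _ ≤ |q| + 1 := by linarith [hηb ω]
          _ = |q| + 1 := by ring)
  have intqηH : Integrable (fun ω => (q - η ω) * H ω) P :=
    intg _ ((measurable_const.sub hηM).mul hHM) (|q| + 1)
      (fun ω => by
        rw [abs_mul]
        calc |q - η ω| * |H ω| ≤ (|q| + 1) * 1 := by
              apply mul_le_mul _ (hHb ω) (abs_nonneg _) (by positivity)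
              calc |q - η ω| ≤ |q| + |η ω| := abs_sub _ _
                _ ≤ |q| + 1 := by linarith [hηb ω]
          _ = |q| + 1 := by ring)
  -- the (q - η)·Hq term equals (q - η)·1_{η>q}
  have hqHq : (fun ω => (q - η ω) * Hq P η α q ω)
      = fun ω => (q - η ω) * {ω' | η ω' > q}.indicator (fun _ => (1:ℝ)) ω := by
    funext ω
    by_cases hωq : η ω = q
    · simp [hωq]
    · unfold Hq
      split_ifs with h
      · rfl
      · simp [Set.indicator_apply, hωq]
  -- pointwise inequality
  have hpt : ∀ ω, (q - η ω) * {ω' | η ω' > q}.indicator (fun _ => (1:ℝ)) ω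
      ≤ (q - η ω) * H ω := by
    intro ω
    rcases lt_trichotomy (η ω) q with h | h | h
    · have : ({ω' | η ω' > q}).indicator (fun _ => (1:ℝ)) ω = 0 := by
        simp [Set.indicator_apply, not_lt.mpr h.le]
      rw [this, mul_zero]
      exact mul_nonneg (by linarith) (hH01 ω).1
    · simp [h]
    · have : ({ω' | η ω' > q}).indicator (fun _ => (1:ℝ)) ω = 1 := by
        simp [Set.indicator_apply, h]
      rw [this]
      exact mul_le_mul_of_nonpos_left (hH01 ω).2 (by linarith)
  have hintle : ∫ ω, (q - η ω) * Hq P η α q ω ∂P ≤ ∫ ω, (q - η ω) * H ω ∂P := by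
    rw [hqHq]
    exact integral_mono intqηq intqηH hpt
  -- conditional expectation identity
  have hcond : ∫ ω, η ω * H ω ∂P = ∫ ω, H ω * A.indicator (fun _ => (1:ℝ)) ω ∂P := by
    rw [hηcond H hHm ⟨1, hHb⟩]
    simp_rw [mul_comm]
  -- expand the two cost integrals
  have E1 : ∫ ω, (1 - H ω) * A.indicator (fun _ => (1:ℝ)) ω ∂P
      = (P A).toReal - ∫ ω, H ω * A.indicator (fun _ => (1:ℝ)) ω ∂P := by
    have : (fun ω => (1 - H ω) * A.indicator (fun _ => (1:ℝ)) ω)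
        = fun ω => A.indicator (fun _ => (1:ℝ)) ω - H ω * A.indicator (fun _ => (1:ℝ)) ω := by
      funext ω; ring
    rw [this, integral_sub int1A intH1A, integral_indicator_const (1:ℝ) hA]
    simp
    rfl
  have E2 : ∫ ω, H ω * Aᶜ.indicator (fun _ => (1:ℝ)) ω ∂P
      = (∫ ω, H ω ∂P) - ∫ ω, H ω * A.indicator (fun _ => (1:ℝ)) ω ∂P := by
    have : (fun ω => H ω * Aᶜ.indicator (fun _ => (1:ℝ)) ω)
        = fun ω => H ω - H ω * A.indicator (fun _ => (1:ℝ)) ω := by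
      funext ω
      by_cases h : ω ∈ A <;> simp [Set.indicator_apply, h]
    rw [this, integral_sub intH intH1A]
  have E6 : ∫ ω, (q - η ω) * H ω ∂P = q * (∫ ω, H ω ∂P) - ∫ ω, η ω * H ω ∂P := by
    have : (fun ω => (q - η ω) * H ω) = fun ω => q * H ω - η ω * H ω := by
      funext ω; ring
    rw [this, integral_sub (intH.const_mul q) intηH, integral_const_mul]
  have hmul : (a + b) * ∫ ω, (q - η ω) * Hq P η α q ω ∂P
      ≤ (a + b) * ∫ ω, (q - η ω) * H ω ∂P :=
    mul_le_mul_of_nonneg_left hintle hab.le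
  rw [cost, E1, E2]
  rw [E6, hcond] at hmul
  nlinarith [hmul]
end

section
/- (Remark 2(iii)) For fixed α ∈ (0,1), irrespective of the relation between q and b/(a+b), the RDC H_q minimizes L_{a,b} among all RDCs with predicted positive rate exactly α: for all a, b ≥ 0 with a + b > 0, every (1−α)-quantile q of η, and every RDC H with E[H] = α, L_{a,b}(H_q) ≤ L_{a,b}(H). -/
open MeasureTheory Set

/-- Remark 2(iii). For fixed `α ∈ (0,1)`, for all `a, b ≥ 0` with
`a + b > 0` and every `(1−α)`-quantile `q` of `η`, the RDC `H_q` minimizes `L_{a,b}` among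
all RDCs with predicted positive rate exactly `α`. -/
theorem Hq_min_cost_of_rate_eq
    {Ω : Type*} (ℋ : MeasurableSpace Ω) [𝒜 : MeasurableSpace Ω]
    (P : Measure Ω) [IsProbabilityMeasure P] (hℋ : ℋ ≤ 𝒜)
    (A : Set Ω) (hA : MeasurableSet A) (hA0 : 0 < P A) (hA1 : P A < 1)
    (hAH : ¬ MeasurableSet[ℋ] A)
    (η : Ω → ℝ) (hηm : Measurable[ℋ] η) (hη01 : ∀ ω, η ω ∈ Set.Icc (0 : ℝ) 1)
    (hηcond : ∀ Z : Ω → ℝ, Measurable[ℋ] Z → (∃ C, ∀ ω, |Z ω| ≤ C) →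
      ∫ ω, η ω * Z ω ∂P = ∫ ω, A.indicator (fun _ => (1 : ℝ)) ω * Z ω ∂P)
    (α : ℝ) (hα : α ∈ Set.Ioo (0 : ℝ) 1)
 :
    ∀ a b : ℝ, 0 ≤ a → 0 ≤ b → 0 < a + b →
      ∀ q : ℝ, (P {ω | η ω < q}).toReal ≤ 1 - α → 1 - α ≤ (P {ω | η ω ≤ q}).toReal →
        ∀ H : Ω → ℝ, IsRDC ℋ H → ∫ ω, H ω ∂P = α →
          cost P A a b (Hq P η α q) ≤ cost P A a b H := by
  intro a b ha hb hab q hq1 hq2 H hH hHα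
  obtain ⟨hHm, hH01⟩ := hH
  have hηM : Measurable η := hηm.mono hℋ le_rfl
  have hHM : Measurable H := hHm.mono hℋ le_rfl
  have hSgtH : MeasurableSet[ℋ] {ω' | η ω' > q} := hηm measurableSet_Ioi
  have hSeqH : MeasurableSet[ℋ] {ω' | η ω' = q} := hηm (measurableSet_singleton q)
  have hSltH : MeasurableSet[ℋ] {ω' | η ω' < q} := hηm measurableSet_Iio
  have hSleH : MeasurableSet[ℋ] {ω' | η ω' ≤ q} := hηm measurableSet_Iic
  have hSgt : MeasurableSet {ω' | η ω' > q} := hℋ _ hSgtH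
  have hSeq : MeasurableSet {ω' | η ω' = q} := hℋ _ hSeqH
  set c : ℝ := (α - (P {ω' | η ω' > q}).toReal) / (P {ω' | η ω' = q}).toReal with hc
  -- pointwise values of Hq
  have hval_lt : ∀ ω, η ω < q → Hq P η α q ω = 0 := by
    intro ω h
    have h1 : ω ∉ {ω' | η ω' > q} := by
      simp only [Set.mem_setOf_eq]; exact not_lt.2 h.le
    have h2 : ω ∉ {ω' | η ω' = q} := by
      simp only [Set.mem_setOf_eq]; exact h.ne
    unfold Hq
    split_ifs <;> simp [Set.indicator_of_notMem h1, Set.indicator_of_notMem h2]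
  have hval_gt : ∀ ω, q < η ω → Hq P η α q ω = 1 := by
    intro ω h
    have h1 : ω ∈ {ω' | η ω' > q} := h
    have h2 : ω ∉ {ω' | η ω' = q} := by
      simp only [Set.mem_setOf_eq]; exact h.ne'
    unfold Hq
    split_ifs <;> simp [Set.indicator_of_mem h1, Set.indicator_of_notMem h2]
  have hvals : ∀ ω, Hq P η α q ω = 0 ∨ Hq P η α q ω = 1 ∨ Hq P η α q ω = c := by
    intro ω
    rcases lt_trichotomy (η ω) q with h | h | h
    · exact Or.inl (hval_lt ω h)
    · have h1 : ω ∉ {ω' | η ω' > q} := by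
        simp only [Set.mem_setOf_eq]; exact not_lt.2 h.le
      have h2 : ω ∈ {ω' | η ω' = q} := h
      by_cases hm : P {ω' | η ω' = q} = 0
      · left; unfold Hq; rw [if_pos hm]; exact Set.indicator_of_notMem h1 _
      · right; right; unfold Hq; rw [if_neg hm]
        rw [Set.indicator_of_notMem h1, Set.indicator_of_mem h2]
        simp [hc]
    · exact Or.inr (Or.inl (hval_gt ω h))
  have hbd : ∀ ω, |Hq P η α q ω| ≤ 1 + |c| := by
    intro ω
    have h0 : (0:ℝ) ≤ |c| := abs_nonneg c
    rcases hvals ω with h | h | h <;> rw [h] <;> simp <;> linarith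
  -- measurability of Hq
  have hHqm : Measurable[ℋ] (Hq P η α q) := by
    by_cases hm : P {ω' | η ω' = q} = 0
    · have : Hq P η α q = {ω' | η ω' > q}.indicator (fun _ => (1:ℝ)) := by
        funext ω; unfold Hq; rw [if_pos hm]
      rw [this]
      exact measurable_const.indicator hSgtH
    · have : Hq P η α q = fun ω => {ω' | η ω' > q}.indicator (fun _ => (1:ℝ)) ω +
          c * {ω' | η ω' = q}.indicator (fun _ => (1:ℝ)) ω := by
        funext ω; unfold Hq; rw [if_neg hm]
      rw [this]
      exact (measurable_const.indicator hSgtH).add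
        ((measurable_const.indicator hSeqH).const_mul c)
  have hHqM : Measurable (Hq P η α q) := hHqm.mono hℋ le_rfl
  -- integrability helper
  have intOf : ∀ f : Ω → ℝ, Measurable f → (∃ C : ℝ, ∀ ω, |f ω| ≤ C) →
      Integrable f P := by
    rintro f hf ⟨C, hC⟩
    exact (integrable_const C).mono' hf.aestronglyMeasurable
      (ae_of_all _ fun ω => by simpa [Real.norm_eq_abs] using hC ω)
  have hηb : ∀ ω, |η ω| ≤ 1 := fun ω =>
    abs_le.2 ⟨by linarith [(hη01 ω).1], (hη01 ω).2⟩
  have hHb : ∀ ω, |H ω| ≤ 1 := fun ω =>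
    abs_le.2 ⟨by linarith [(hH01 ω).1], (hH01 ω).2⟩
  -- ∫ Hq = α
  have hPle : P {ω' | η ω' ≤ q} = P {ω' | η ω' < q} + P {ω' | η ω' = q} := by
    rw [← measure_union (by
        rw [Set.disjoint_left]; intro ω h1 h2
        exact absurd h2 (by simp only [Set.mem_setOf_eq] at h1 ⊢; exact h1.ne)) hSeq]
    congr 1
    ext ω; simp only [Set.mem_union, Set.mem_setOf_eq]
    exact le_iff_lt_or_eq
  have hPgt : (P {ω' | η ω' > q}).toReal = 1 - (P {ω' | η ω' ≤ q}).toReal := by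
    have hcompl : {ω' | η ω' > q} = {ω' | η ω' ≤ q}ᶜ := by
      ext ω; simp [not_le]
    rw [hcompl, measure_compl (hℋ _ hSleH) (measure_ne_top P _)]
    rw [measure_univ, ENNReal.toReal_sub_of_le prob_le_one ENNReal.one_ne_top,
      ENNReal.toReal_one]
  have hHqα : ∫ ω, Hq P η α q ω ∂P = α := by
    by_cases hm : P {ω' | η ω' = q} = 0
    · have heq : Hq P η α q = {ω' | η ω' > q}.indicator (fun _ => (1:ℝ)) := by
        funext ω; unfold Hq; rw [if_pos hm]
      have hle : (P {ω' | η ω' ≤ q}).toReal = 1 - α := by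
        have : P {ω' | η ω' ≤ q} = P {ω' | η ω' < q} := by rw [hPle, hm, add_zero]
        rw [this]
        exact le_antisymm hq1 (by rw [← this]; exact hq2)
      rw [heq, integral_indicator_const (1:ℝ) hSgt, smul_eq_mul, mul_one, measureReal_def, hPgt, hle]
      ring
    · have hmt : (P {ω' | η ω' = q}).toReal ≠ 0 :=
        ENNReal.toReal_ne_zero.2 ⟨hm, measure_ne_top P _⟩
      have heq : Hq P η α q = fun ω => {ω' | η ω' > q}.indicator (fun _ => (1:ℝ)) ω +
          c * {ω' | η ω' = q}.indicator (fun _ => (1:ℝ)) ω := by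
        funext ω; unfold Hq; rw [if_neg hm]
      have i1 : Integrable ({ω' | η ω' > q}.indicator (fun _ => (1:ℝ))) P :=
        (integrable_const (1:ℝ)).indicator hSgt
      have i2 : Integrable ({ω' | η ω' = q}.indicator (fun _ => (1:ℝ))) P :=
        (integrable_const (1:ℝ)).indicator hSeq
      rw [heq, integral_add i1 (i2.const_mul c), integral_const_mul,
        integral_indicator_const (1:ℝ) hSgt, integral_indicator_const (1:ℝ) hSeq,
        smul_eq_mul, smul_eq_mul, mul_one, mul_one, measureReal_def, measureReal_def, hc,
        div_mul_cancel₀ _ hmt]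
      ring
  -- cost formula
  have hindM : Measurable (A.indicator (fun _ => (1:ℝ))) := measurable_const.indicator hA
  have hindInt : Integrable (A.indicator (fun _ => (1:ℝ))) P :=
    (integrable_const (1:ℝ)).indicator hA
  have costEq : ∀ G : Ω → ℝ, Measurable[ℋ] G → (∀ C0 : ℝ, C0 = C0) → ∀ C : ℝ,
      (∀ ω, |G ω| ≤ C) →
      cost P A a b G = a * (P A).toReal + b * (∫ ω, G ω ∂P) -
        (a + b) * ∫ ω, η ω * G ω ∂P := by
    intro G hGm _ C hC
    have hGM : Measurable G := hGm.mono hℋ le_rfl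
    have hGA : Integrable (fun ω => G ω * A.indicator (fun _ => (1:ℝ)) ω) P := by
      refine intOf _ (hGM.mul hindM) ⟨|C|, fun ω => ?_⟩
      by_cases h : ω ∈ A
      · simp only [Set.indicator_of_mem h, mul_one]
        exact (hC ω).trans (le_abs_self C)
      · simp [Set.indicator_of_notMem h]
    have hGint : Integrable G P := intOf G hGM ⟨C, hC⟩
    have e3 : ∫ ω, G ω * A.indicator (fun _ => (1:ℝ)) ω ∂P = ∫ ω, η ω * G ω ∂P := by
      rw [hηcond G hGm ⟨C, hC⟩]
      congr 1; funext ω; ring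
    have e1 : ∫ ω, (1 - G ω) * A.indicator (fun _ => (1:ℝ)) ω ∂P =
        (P A).toReal - ∫ ω, η ω * G ω ∂P := by
      have hfe : (fun ω => (1 - G ω) * A.indicator (fun _ => (1:ℝ)) ω) =
          fun ω => A.indicator (fun _ => (1:ℝ)) ω -
            G ω * A.indicator (fun _ => (1:ℝ)) ω := by
        funext ω; ring
      rw [hfe, integral_sub hindInt hGA, integral_indicator_const (1:ℝ) hA,
        smul_eq_mul, mul_one, measureReal_def, e3]
    have e2 : ∫ ω, G ω * Aᶜ.indicator (fun _ => (1:ℝ)) ω ∂P =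
        (∫ ω, G ω ∂P) - ∫ ω, η ω * G ω ∂P := by
      have hfe : (fun ω => G ω * Aᶜ.indicator (fun _ => (1:ℝ)) ω) =
          fun ω => G ω - G ω * A.indicator (fun _ => (1:ℝ)) ω := by
        funext ω
        by_cases h : ω ∈ A
        · simp [Set.indicator_of_mem h, Set.indicator_of_notMem (by simpa using h :
            ω ∉ Aᶜ)]
        · simp [Set.indicator_of_notMem h, Set.indicator_of_mem (by simpa using h :
            ω ∈ Aᶜ)]
      rw [hfe, integral_sub hGint hGA, e3]
    unfold cost
    rw [e1, e2]
    ring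
  -- integrability of key integrands
  have hintηH : Integrable (fun ω => η ω * H ω) P :=
    intOf _ (hηM.mul hHM) ⟨1, fun ω => by
      rw [abs_mul]
      calc |η ω| * |H ω| ≤ 1 * 1 :=
        mul_le_mul (hηb ω) (hHb ω) (abs_nonneg _) zero_le_one
      _ = 1 := by ring⟩
  have hintηHq : Integrable (fun ω => η ω * Hq P η α q ω) P :=
    intOf _ (hηM.mul hHqM) ⟨1 + |c|, fun ω => by
      rw [abs_mul]
      calc |η ω| * |Hq P η α q ω| ≤ 1 * (1 + |c|) :=
        mul_le_mul (hηb ω) (hbd ω) (abs_nonneg _) zero_le_one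
      _ = 1 + |c| := by ring⟩
  have hintHq : Integrable (Hq P η α q) P := intOf _ hHqM ⟨1 + |c|, hbd⟩
  have hintH : Integrable H P := intOf _ hHM ⟨1, hHb⟩
  have hintkey : Integrable (fun ω => (η ω - q) * (Hq P η α q ω - H ω)) P :=
    intOf _ ((hηM.sub measurable_const).mul (hHqM.sub hHM))
      ⟨(1 + |q|) * (1 + |c| + 1), fun ω => by
        rw [abs_mul]
        refine mul_le_mul ((abs_sub _ _).trans ?_) ((abs_sub _ _).trans ?_)
          (abs_nonneg _) (by positivity)
        · linarith [hηb ω]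
        · linarith [hbd ω, hHb ω]⟩
  have hintqkey : Integrable (fun ω => q * (Hq P η α q ω - H ω)) P :=
    ((hintHq.sub hintH).const_mul q)
  -- key inequality
  have hkey : ∫ ω, η ω * H ω ∂P ≤ ∫ ω, η ω * Hq P η α q ω ∂P := by
    have hsplit : (fun ω => η ω * Hq P η α q ω - η ω * H ω) =
        fun ω => (η ω - q) * (Hq P η α q ω - H ω) + q * (Hq P η α q ω - H ω) := by
      funext ω; ring
    have h1 : ∫ ω, (η ω * Hq P η α q ω - η ω * H ω) ∂P =
        ∫ ω, (η ω - q) * (Hq P η α q ω - H ω) ∂P +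
          q * ((∫ ω, Hq P η α q ω ∂P) - ∫ ω, H ω ∂P) := by
      rw [hsplit, integral_add hintkey hintqkey, integral_const_mul,
        integral_sub hintHq hintH]
    rw [integral_sub hintηHq hintηH] at h1
    have h2 : 0 ≤ ∫ ω, (η ω - q) * (Hq P η α q ω - H ω) ∂P := by
      refine integral_nonneg fun ω => ?_
      simp only [Pi.zero_apply]
      rcases lt_trichotomy (η ω) q with h | h | h
      · rw [hval_lt ω h]
        have := (hH01 ω).1
        nlinarith
      · rw [h, sub_self, zero_mul]
      · rw [hval_gt ω h]
        have := (hH01 ω).2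
        nlinarith
    rw [hHqα, hHα, sub_self, mul_zero, add_zero] at h1
    linarith
  rw [costEq H hHm (fun _ => rfl) 1 hHb,
    costEq (Hq P η α q) hHqm (fun _ => rfl) (1 + |c|) hbd, hHα, hHqα]
  nlinarith [mul_le_mul_of_nonneg_left hkey hab.le]
end

section
/- (Remark 2(iv): minimal false positive rate) The RDC H_q minimizes the false positive rate among all RDCs with predicted positive rate at least α: for every RDC H with E[H] ≥ α, E[H_q·1_{A^c}]/P[A^c] ≤ E[H·1_{A^c}]/P[A^c]. -/
open MeasureTheory Set

/-- Remark 2(iv). `H_q` minimizes the false positive rate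
`E[H·1_{Aᶜ}]/P[Aᶜ]` among all RDCs with predicted positive rate at least `α`. -/
theorem Hq_min_FPR
    {Ω : Type*} (ℋ : MeasurableSpace Ω) [𝒜 : MeasurableSpace Ω]
    (P : Measure Ω) [IsProbabilityMeasure P] (hℋ : ℋ ≤ 𝒜)
    (A : Set Ω) (hA : MeasurableSet A) (hA0 : 0 < P A) (hA1 : P A < 1)
    (hAH : ¬ MeasurableSet[ℋ] A)
    (η : Ω → ℝ) (hηm : Measurable[ℋ] η) (hη01 : ∀ ω, η ω ∈ Set.Icc (0 : ℝ) 1)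
    (hηcond : ∀ Z : Ω → ℝ, Measurable[ℋ] Z → (∃ C, ∀ ω, |Z ω| ≤ C) →
      ∫ ω, η ω * Z ω ∂P = ∫ ω, A.indicator (fun _ => (1 : ℝ)) ω * Z ω ∂P)
    (α : ℝ) (hα : α ∈ Set.Ioo (0 : ℝ) 1)
    (q : ℝ) (hq₁ : (P {ω | η ω < q}).toReal ≤ 1 - α)
    (hq₂ : 1 - α ≤ (P {ω | η ω ≤ q}).toReal)
 :
    ∀ H : Ω → ℝ, IsRDC ℋ H → α ≤ ∫ ω, H ω ∂P →
      (∫ ω, Hq P η α q ω * Aᶜ.indicator (fun _ => (1 : ℝ)) ω ∂P) / (P Aᶜ).toReal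
        ≤ (∫ ω, H ω * Aᶜ.indicator (fun _ => (1 : ℝ)) ω ∂P) / (P Aᶜ).toReal := by
  intro H hH hαH
  obtain ⟨hHm, hH01⟩ := hH
  have hηM : Measurable η := hηm.mono hℋ le_rfl
  have hHM : Measurable H := hHm.mono hℋ le_rfl
  set Sgt : Set Ω := {ω' | η ω' > q} with hSgt_def
  set Seq : Set Ω := {ω' | η ω' = q} with hSeq_def
  have hSgtℋ : MeasurableSet[ℋ] Sgt := measurableSet_lt measurable_const hηm
  have hSeqℋ : MeasurableSet[ℋ] Seq := hηm (measurableSet_singleton q)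
  have hSgtM : MeasurableSet Sgt := hℋ _ hSgtℋ
  have hSeqM : MeasurableSet Seq := hℋ _ hSeqℋ
  set c : ℝ := (α - (P Sgt).toReal) / (P Seq).toReal with hc_def
  set G : Ω → ℝ := Hq P η α q with hG_def
  have hGif : ∀ ω, G ω = if P {ω' | η ω' = q} = 0 then Sgt.indicator (fun _ => (1:ℝ)) ω
      else Sgt.indicator (fun _ => (1:ℝ)) ω + c * Seq.indicator (fun _ => (1:ℝ)) ω :=
    fun ω => rfl
  have hGpos : P {ω' | η ω' = q} = 0 →
      G = fun ω => Sgt.indicator (fun _ => (1:ℝ)) ω :=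
    fun h0 => funext fun ω => by rw [hGif ω, if_pos h0]
  have hGneg : ¬ P {ω' | η ω' = q} = 0 →
      G = fun ω => Sgt.indicator (fun _ => (1:ℝ)) ω + c * Seq.indicator (fun _ => (1:ℝ)) ω :=
    fun h0 => funext fun ω => by rw [hGif ω, if_neg h0]
  -- integrability helper
  have hinteg : ∀ f : Ω → ℝ, Measurable f → ∀ C : ℝ, (∀ ω, |f ω| ≤ C) → Integrable f P := by
    intro f hf C hC
    exact (integrable_const C).mono' hf.aestronglyMeasurable (ae_of_all _ fun ω => hC ω)
  -- q ≤ 1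
  have hq1 : q ≤ 1 := by
    by_contra h
    push_neg at h
    have huniv : {ω | η ω < q} = univ := by
      ext ω; simp only [mem_setOf_eq, mem_univ, iff_true]
      exact lt_of_le_of_lt (hη01 ω).2 h
    rw [huniv] at hq₁
    simp at hq₁
    linarith [hα.1]
  -- pointwise facts about G
  have hGgt : ∀ ω, q < η ω → G ω = 1 := by
    intro ω hω
    have h1 : ω ∈ Sgt := hω
    have h2 : ω ∉ Seq := by simp only [hSeq_def, mem_setOf_eq]; exact ne_of_gt hω
    by_cases h0 : P {ω' | η ω' = q} = 0
    · simp [hGpos h0, indicator_of_mem h1]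
    · simp [hGneg h0, indicator_of_mem h1, indicator_of_notMem h2]
  have hGlt : ∀ ω, η ω < q → G ω = 0 := by
    intro ω hω
    have h1 : ω ∉ Sgt := by simp only [hSgt_def, mem_setOf_eq]; exact not_lt.mpr hω.le
    have h2 : ω ∉ Seq := by simp only [hSeq_def, mem_setOf_eq]; exact ne_of_lt hω
    by_cases h0 : P {ω' | η ω' = q} = 0
    · simp [hGpos h0, indicator_of_notMem h1]
    · simp [hGneg h0, indicator_of_notMem h1, indicator_of_notMem h2]
  -- bound on G
  have hGbd : ∀ ω, |G ω| ≤ 1 + |c| := by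
    intro ω
    have hi1 : |Sgt.indicator (fun _ => (1:ℝ)) ω| ≤ 1 := by
      by_cases h : ω ∈ Sgt <;> simp [indicator_of_mem, indicator_of_notMem, h]
    have hi2 : |Seq.indicator (fun _ => (1:ℝ)) ω| ≤ 1 := by
      by_cases h : ω ∈ Seq <;> simp [indicator_of_mem, indicator_of_notMem, h]
    by_cases h0 : P {ω' | η ω' = q} = 0
    · rw [hGpos h0]; have := abs_nonneg c; linarith
    · rw [hGneg h0]
      calc |Sgt.indicator (fun _ => (1:ℝ)) ω + c * Seq.indicator (fun _ => (1:ℝ)) ω|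
          ≤ |Sgt.indicator (fun _ => (1:ℝ)) ω| + |c * Seq.indicator (fun _ => (1:ℝ)) ω| :=
            abs_add_le _ _
        _ ≤ 1 + |c| := by
            rw [abs_mul]
            have : |c| * |Seq.indicator (fun _ => (1:ℝ)) ω| ≤ |c| * 1 :=
              mul_le_mul_of_nonneg_left hi2 (abs_nonneg c)
            linarith
  -- measurability of G
  have hGℋ : Measurable[ℋ] G := by
    by_cases h0 : P {ω' | η ω' = q} = 0
    · rw [hGpos h0]
      exact (measurable_const : Measurable[ℋ] (fun _ : Ω => (1:ℝ))).indicator hSgtℋ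
    · rw [hGneg h0]
      exact ((measurable_const : Measurable[ℋ] (fun _ : Ω => (1:ℝ))).indicator hSgtℋ).add
        (((measurable_const : Measurable[ℋ] (fun _ : Ω => (1:ℝ))).indicator hSeqℋ).const_mul c)
  have hGM : Measurable G := hGℋ.mono hℋ le_rfl
  -- integral of G is at most α
  have hGint : Integrable G P := hinteg G hGM _ hGbd
  have hHint : Integrable H P := hinteg H hHM 1 (fun ω => abs_le.mpr ⟨by linarith [(hH01 ω).1], (hH01 ω).2⟩)
  have hEG : ∫ ω, G ω ∂P ≤ α := by
    by_cases h0 : P {ω' | η ω' = q} = 0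
    · have hEq : ∫ ω, G ω ∂P = (P Sgt).toReal := by
        simp only [hG_def, Hq, if_pos h0]
        rw [integral_indicator_const (1:ℝ) hSgtM]; simp [measureReal_def]
      rw [hEq]
      -- P Sgt = 1 - P {η ≤ q}
      have hcompl : Sgt = {ω | η ω ≤ q}ᶜ := by
        ext ω; simp [hSgt_def, not_le]
      have hle : MeasurableSet {ω | η ω ≤ q} := measurableSet_le hηM measurable_const
      have h1 : (P Sgt) = 1 - P {ω | η ω ≤ q} := by
        rw [hcompl]; exact prob_compl_eq_one_sub hle
      have hfin : P {ω | η ω ≤ q} ≤ 1 := prob_le_one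
      rw [h1, ENNReal.toReal_sub_of_le hfin (by simp)]
      simp only [ENNReal.toReal_one]
      linarith
    · have hEq : ∫ ω, G ω ∂P = (P Sgt).toReal + c * (P Seq).toReal := by
        simp only [hG_def, Hq, if_neg h0]
        rw [integral_add, integral_const_mul, integral_indicator_const (1:ℝ) hSgtM,
          integral_indicator_const (1:ℝ) hSeqM]
        · simp [measureReal_def]; exact Or.inl rfl
        · exact hinteg _ (measurable_const.indicator hSgtM) 1
            (fun ω => by rw [Set.indicator_apply]; split_ifs <;> norm_num)
        · exact (hinteg _ (measurable_const.indicator hSeqM) 1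
            (fun ω => by by_cases h : ω ∈ Seq <;> simp [indicator_of_mem, indicator_of_notMem, h])).const_mul c
      rw [hEq]
      have hne : (P Seq).toReal ≠ 0 := by
        have h0' : P Seq ≠ 0 := by rw [hSeq_def]; exact h0
        simp [ENNReal.toReal_eq_zero_iff, h0', (measure_lt_top P Seq).ne]
      rw [hc_def, div_mul_cancel₀ _ hne]
      linarith
  -- key: ∫ Z·1_{Aᶜ} = ∫ Z·(1-η) for bounded ℋ-measurable Z
  have hηbd : ∀ ω, |η ω| ≤ 1 := fun ω => abs_le.mpr ⟨by linarith [(hη01 ω).1], (hη01 ω).2⟩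
  have hηint : Integrable η P := hinteg η hηM 1 hηbd
  have key : ∀ Z : Ω → ℝ, Measurable[ℋ] Z → ∀ C : ℝ, (∀ ω, |Z ω| ≤ C) →
      ∫ ω, Z ω * Aᶜ.indicator (fun _ => (1:ℝ)) ω ∂P = ∫ ω, Z ω * (1 - η ω) ∂P := by
    intro Z hZℋ C hZC
    have hZM : Measurable Z := hZℋ.mono hℋ le_rfl
    have hZint : Integrable Z P := hinteg Z hZM C hZC
    have hind : ∀ ω, |A.indicator (fun _ => (1:ℝ)) ω| ≤ 1 := by
      intro ω; by_cases h : ω ∈ A <;> simp [indicator_of_mem, indicator_of_notMem, h]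
    have hZA : Integrable (fun ω => Z ω * A.indicator (fun _ => (1:ℝ)) ω) P := by
      refine hinteg _ (hZM.mul (measurable_const.indicator hA)) C fun ω => ?_
      rw [abs_mul]
      calc |Z ω| * |A.indicator (fun _ => (1:ℝ)) ω| ≤ |Z ω| * 1 :=
            mul_le_mul_of_nonneg_left (hind ω) (abs_nonneg _)
        _ ≤ C := by rw [mul_one]; exact hZC ω
    have hηZ : Integrable (fun ω => η ω * Z ω) P := by
      refine hinteg _ (hηM.mul hZM) C fun ω => ?_
      rw [abs_mul]
      calc |η ω| * |Z ω| ≤ 1 * |Z ω| :=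
            mul_le_mul_of_nonneg_right (hηbd ω) (abs_nonneg _)
        _ ≤ C := by rw [one_mul]; exact hZC ω
    have hZη : Integrable (fun ω => Z ω * η ω) P := by
      have : (fun ω => Z ω * η ω) = fun ω => η ω * Z ω := by funext ω; ring
      rw [this]; exact hηZ
    have hcond := hηcond Z hZℋ ⟨C, hZC⟩
    have lhs : ∫ ω, Z ω * Aᶜ.indicator (fun _ => (1:ℝ)) ω ∂P
        = ∫ ω, Z ω ∂P - ∫ ω, Z ω * A.indicator (fun _ => (1:ℝ)) ω ∂P := by
      rw [← integral_sub hZint hZA]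
      apply integral_congr_ae
      filter_upwards with ω
      by_cases h : ω ∈ A
      · simp [indicator_of_mem, indicator_of_notMem, h]
      · simp [indicator_of_mem, indicator_of_notMem, h]
    have rhs : ∫ ω, Z ω * (1 - η ω) ∂P = ∫ ω, Z ω ∂P - ∫ ω, Z ω * η ω ∂P := by
      rw [← integral_sub hZint hZη]
      apply integral_congr_ae
      filter_upwards with ω
      ring
    have hZA' : ∫ ω, Z ω * A.indicator (fun _ => (1:ℝ)) ω ∂P = ∫ ω, Z ω * η ω ∂P := by
      calc ∫ ω, Z ω * A.indicator (fun _ => (1:ℝ)) ω ∂P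
          = ∫ ω, A.indicator (fun _ => (1:ℝ)) ω * Z ω ∂P := by
            apply integral_congr_ae; filter_upwards with ω; ring
        _ = ∫ ω, η ω * Z ω ∂P := hcond.symm
        _ = ∫ ω, Z ω * η ω ∂P := by
            apply integral_congr_ae; filter_upwards with ω; ring
    rw [lhs, rhs, hZA']
  -- main inequality: ∫ G(1-η) ≤ ∫ H(1-η)
  have hHGbd : ∀ ω, |H ω - G ω| ≤ 2 + |c| := by
    intro ω
    calc |H ω - G ω| ≤ |H ω| + |G ω| := abs_sub _ _
      _ ≤ 1 + (1 + |c|) := add_le_add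
          (abs_le.mpr ⟨by linarith [(hH01 ω).1], (hH01 ω).2⟩) (hGbd ω)
      _ = 2 + |c| := by ring
  have hHGint : Integrable (fun ω => H ω - G ω) P := hHint.sub hGint
  have hint1 : Integrable (fun ω => (H ω - G ω) * (q - η ω)) P := by
    refine hinteg _ ((hHM.sub hGM).mul (measurable_const.sub hηM)) ((2 + |c|) * (|q| + 1))
      fun ω => ?_
    rw [abs_mul]
    apply mul_le_mul (hHGbd ω) _ (abs_nonneg _) (by positivity)
    calc |q - η ω| ≤ |q| + |η ω| := abs_sub _ _
      _ ≤ |q| + 1 := by linarith [hηbd ω]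
  have hint2 : Integrable (fun ω => (1 - q) * (H ω - G ω)) P := hHGint.const_mul _
  have hpt : ∀ ω, 0 ≤ (H ω - G ω) * (q - η ω) := by
    intro ω
    rcases lt_trichotomy (η ω) q with h | h | h
    · rw [hGlt ω h]
      apply mul_nonneg (by linarith [(hH01 ω).1]) (by linarith)
    · rw [h]; simp
    · rw [hGgt ω h]
      nlinarith [(hH01 ω).2]
  have e1 : 0 ≤ ∫ ω, (H ω - G ω) * (q - η ω) ∂P := integral_nonneg hpt
  have e2 : ∫ ω, (1 - q) * (H ω - G ω) ∂P = (1 - q) * (∫ ω, H ω ∂P - ∫ ω, G ω ∂P) := by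
    rw [integral_const_mul, integral_sub hHint hGint]
  have e3 : 0 ≤ (1 - q) * (∫ ω, H ω ∂P - ∫ ω, G ω ∂P) :=
    mul_nonneg (by linarith) (by linarith)
  have hmain : ∫ ω, G ω * (1 - η ω) ∂P ≤ ∫ ω, H ω * (1 - η ω) ∂P := by
    have hGη : Integrable (fun ω => G ω * (1 - η ω)) P := by
      refine hinteg _ (hGM.mul (measurable_const.sub hηM)) ((1 + |c|) * 2) fun ω => ?_
      rw [abs_mul]
      apply mul_le_mul (hGbd ω) _ (abs_nonneg _) (by positivity)
      calc |1 - η ω| ≤ |(1:ℝ)| + |η ω| := abs_sub _ _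
        _ ≤ 2 := by rw [abs_one]; linarith [hηbd ω]
    have hHη : Integrable (fun ω => H ω * (1 - η ω)) P := by
      refine hinteg _ (hHM.mul (measurable_const.sub hηM)) 2 fun ω => ?_
      rw [abs_mul]
      calc |H ω| * |1 - η ω| ≤ 1 * 2 := by
            apply mul_le_mul (abs_le.mpr ⟨by linarith [(hH01 ω).1], (hH01 ω).2⟩)
              _ (abs_nonneg _) zero_le_one
            calc |1 - η ω| ≤ |(1:ℝ)| + |η ω| := abs_sub _ _
              _ ≤ 2 := by rw [abs_one]; linarith [hηbd ω]
        _ = 2 := by ring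
    have hdiff : ∫ ω, H ω * (1 - η ω) ∂P - ∫ ω, G ω * (1 - η ω) ∂P
        = ∫ ω, (1 - q) * (H ω - G ω) ∂P + ∫ ω, (H ω - G ω) * (q - η ω) ∂P := by
      rw [← integral_sub hHη hGη, ← integral_add hint2 hint1]
      apply integral_congr_ae
      filter_upwards with ω
      ring
    have : 0 ≤ ∫ ω, H ω * (1 - η ω) ∂P - ∫ ω, G ω * (1 - η ω) ∂P := by
      rw [hdiff, e2]; linarith
    linarith
  -- conclude
  have lhs' := key G hGℋ (1 + |c|) hGbd
  have rhs' := key H hHm 1 (fun ω => abs_le.mpr ⟨by linarith [(hH01 ω).1], (hH01 ω).2⟩)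
  rw [lhs', rhs']
  exact div_le_div_of_nonneg_right hmain ENNReal.toReal_nonneg
end

section
/- (Recall at the top, eq. (5b)) The RDC H_q maximizes recall among all RDCs with predicted positive rate exactly α: for every RDC H with E[H] = α, recall(H) ≤ recall(H_q), where recall(H) = E[H·1_A]/P[A]. -/
open MeasureTheory Set

/-- recall at the top. `H_q` maximizes recall
`E[H·1_A]/P[A]` among all RDCs with predicted positive rate exactly `α`. -/
theorem Hq_max_recall
    {Ω : Type*} (ℋ : MeasurableSpace Ω) [𝒜 : MeasurableSpace Ω]
    (P : Measure Ω) [IsProbabilityMeasure P] (hℋ : ℋ ≤ 𝒜)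
    (A : Set Ω) (hA : MeasurableSet A) (hA0 : 0 < P A) (hA1 : P A < 1)
    (hAH : ¬ MeasurableSet[ℋ] A)
    (η : Ω → ℝ) (hηm : Measurable[ℋ] η) (hη01 : ∀ ω, η ω ∈ Set.Icc (0 : ℝ) 1)
    (hηcond : ∀ Z : Ω → ℝ, Measurable[ℋ] Z → (∃ C, ∀ ω, |Z ω| ≤ C) →
      ∫ ω, η ω * Z ω ∂P = ∫ ω, A.indicator (fun _ => (1 : ℝ)) ω * Z ω ∂P)
    (α : ℝ) (hα : α ∈ Set.Ioo (0 : ℝ) 1)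
    (q : ℝ) (hq₁ : (P {ω | η ω < q}).toReal ≤ 1 - α)
    (hq₂ : 1 - α ≤ (P {ω | η ω ≤ q}).toReal)
 :
    ∀ H : Ω → ℝ, IsRDC ℋ H → ∫ ω, H ω ∂P = α →
      (∫ ω, H ω * A.indicator (fun _ => (1 : ℝ)) ω ∂P) / (P A).toReal
        ≤ (∫ ω, Hq P η α q ω * A.indicator (fun _ => (1 : ℝ)) ω ∂P) / (P A).toReal := by
  intro H hH hHα
  obtain ⟨hHm, hH01⟩ := hH
  classical
  set S : Set Ω := {ω' | η ω' > q} with hSdef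
  set T : Set Ω := {ω' | η ω' = q} with hTdef
  have hS : MeasurableSet[ℋ] S := measurableSet_lt measurable_const hηm
  have hT : MeasurableSet[ℋ] T := hηm (measurableSet_singleton q)
  have hS' : MeasurableSet S := hℋ _ hS
  have hT' : MeasurableSet T := hℋ _ hT
  set c : ℝ := if P T = 0 then 0 else (α - (P S).toReal) / (P T).toReal with hcdef
  set g : Ω → ℝ := fun ω =>
    S.indicator (fun _ => (1:ℝ)) ω + c * T.indicator (fun _ => (1:ℝ)) ω with hgdef
  have hgeq : ∀ ω, Hq P η α q ω = g ω := by
    intro ω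
    by_cases hPT : P T = 0
    · simp [Hq, hgdef, hcdef, ← hSdef, ← hTdef, hPT]
    · simp [Hq, hgdef, hcdef, ← hSdef, ← hTdef, hPT]
  -- measurability
  have hηm' : Measurable η := hηm.mono hℋ le_rfl
  have hHm' : Measurable H := hHm.mono hℋ le_rfl
  have hgm : Measurable[ℋ] g :=
    Measurable.add (measurable_const.indicator hS)
      ((measurable_const.indicator hT).const_mul c)
  have hgm' : Measurable g := hgm.mono hℋ le_rfl
  -- boundedness helpers
  have hindle : ∀ (U : Set Ω) (ω : Ω), |U.indicator (fun _ => (1:ℝ)) ω| ≤ 1 := by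
    intro U ω; by_cases h : ω ∈ U <;> simp [h]
  have hgbd : ∀ ω, |g ω| ≤ 1 + |c| := by
    intro ω
    calc |g ω| ≤ |S.indicator (fun _ => (1:ℝ)) ω| + |c * T.indicator (fun _ => (1:ℝ)) ω| :=
          abs_add_le _ _
      _ ≤ 1 + |c| := by
          have h1 := hindle S ω
          have h2 := hindle T ω
          have h3 : |c * T.indicator (fun _ => (1:ℝ)) ω| = |c| * |T.indicator (fun _ => (1:ℝ)) ω| :=
            abs_mul _ _
          nlinarith [abs_nonneg c, abs_nonneg (T.indicator (fun _ => (1:ℝ)) ω)]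
  have hHbd : ∀ ω, |H ω| ≤ 1 := by
    intro ω; rcases hH01 ω with ⟨h0, h1⟩; rw [abs_le]; constructor <;> linarith
  have hηbd : ∀ ω, |η ω| ≤ 1 := by
    intro ω; rcases hη01 ω with ⟨h0, h1⟩; rw [abs_le]; constructor <;> linarith
  have hcnn : (0:ℝ) ≤ 1 + |c| := by positivity
  -- integrability helper
  have hintbd : ∀ (f : Ω → ℝ), Measurable f → (∀ ω, |f ω| ≤ 1 + |c|) → Integrable f P := by
    intro f hf hC
    exact ⟨hf.aestronglyMeasurable,
      HasFiniteIntegral.of_bounded (C := 1 + |c|)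
        (ae_of_all _ fun ω => by simpa [Real.norm_eq_abs] using hC ω)⟩
  have hle1 : ∀ x : ℝ, |x| ≤ 1 → |x| ≤ 1 + |c| := fun x hx =>
    hx.trans (le_add_of_nonneg_right (abs_nonneg c))
  have hint_H : Integrable H P := hintbd H hHm' fun ω => hle1 _ (hHbd ω)
  have hint_g : Integrable g P := hintbd g hgm' hgbd
  have hint_ηH : Integrable (fun ω => η ω * H ω) P := by
    refine hintbd _ (hηm'.mul hHm') fun ω => ?_
    rw [abs_mul]
    have := hηbd ω; have := hHbd ω
    nlinarith [abs_nonneg (η ω), abs_nonneg (H ω), abs_nonneg c]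
  have hint_ηg : Integrable (fun ω => η ω * g ω) P := by
    refine hintbd _ (hηm'.mul hgm') fun ω => ?_
    rw [abs_mul]
    have := hηbd ω; have := hgbd ω
    nlinarith [abs_nonneg (η ω), abs_nonneg (g ω), abs_nonneg c]
  -- measure arithmetic
  set Slt : Set Ω := {ω | η ω < q} with hSltdef
  set Sle : Set Ω := {ω | η ω ≤ q} with hSledef
  have hSlt' : MeasurableSet Slt := hℋ _ (measurableSet_lt hηm measurable_const)
  have hSle' : MeasurableSet Sle := hℋ _ (measurableSet_le hηm measurable_const)
  have hSleUnion : Sle = Slt ∪ T := by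
    ext ω; simp only [hSledef, hSltdef, hTdef, mem_setOf_eq, mem_union]
    exact le_iff_lt_or_eq
  have hdisj : Disjoint Slt T := by
    rw [Set.disjoint_left]; intro ω h1 h2
    simp only [hSltdef, mem_setOf_eq] at h1
    simp only [hTdef, mem_setOf_eq] at h2
    exact absurd h2 (ne_of_lt h1)
  have hPle : (P Sle).toReal = (P Slt).toReal + (P T).toReal := by
    rw [hSleUnion, measure_union hdisj hT',
      ENNReal.toReal_add (measure_ne_top P _) (measure_ne_top P _)]
  have hScompl : S = Sleᶜ := by
    ext ω; simp [hSdef, hSledef, not_le]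
  have hPS : (P S).toReal = 1 - (P Sle).toReal := by
    rw [hScompl, prob_compl_eq_one_sub hSle',
      ENNReal.toReal_sub_of_le prob_le_one ENNReal.one_ne_top, ENNReal.toReal_one]
  -- integral of g
  have hIndS : Integrable (S.indicator (fun _ => (1:ℝ))) P := (integrable_const 1).indicator hS'
  have hIndT : Integrable (T.indicator (fun _ => (1:ℝ))) P := (integrable_const 1).indicator hT'
  have hgint : ∫ ω, g ω ∂P = (P S).toReal + c * (P T).toReal := by
    rw [hgdef]
    rw [integral_add hIndS (hIndT.const_mul c), integral_const_mul,
      integral_indicator_const (1:ℝ) hS', integral_indicator_const (1:ℝ) hT']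
    simp [measureReal_def]
  have hgα : ∫ ω, g ω ∂P = α := by
    rw [hgint]
    by_cases hPT : P T = 0
    · have hT0 : (P T).toReal = 0 := by simp [hPT]
      have h1 : (P Sle).toReal = 1 - α := by
        have := hPle
        rw [hT0] at this
        have h2 := hq₁
        have h3 := hq₂
        rw [hSltdef] at *
        linarith [this]
      rw [hPS, h1, hT0]
      ring
    · have hTne : (P T).toReal ≠ 0 :=
        ENNReal.toReal_ne_zero.mpr ⟨hPT, measure_ne_top P T⟩
      rw [hcdef, if_neg hPT]
      field_simp
      ring
  -- conditional expectation identities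
  have hcond_H : ∫ ω, H ω * A.indicator (fun _ => (1:ℝ)) ω ∂P = ∫ ω, η ω * H ω ∂P := by
    rw [hηcond H hHm ⟨1, hHbd⟩]
    exact integral_congr_ae (ae_of_all _ fun ω => mul_comm _ _)
  have hcond_g : ∫ ω, g ω * A.indicator (fun _ => (1:ℝ)) ω ∂P = ∫ ω, η ω * g ω ∂P := by
    rw [hηcond g hgm ⟨1 + |c|, hgbd⟩]
    exact integral_congr_ae (ae_of_all _ fun ω => mul_comm _ _)
  -- key pointwise inequality
  have hkey : 0 ≤ ∫ ω, (g ω - H ω) * (η ω - q) ∂P := by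
    refine integral_nonneg fun ω => ?_
    simp only [Pi.zero_apply]
    rcases lt_trichotomy (η ω) q with hlt | heq | hgt
    · have hgS : ω ∉ S := by simp [hSdef, not_lt.mpr hlt.le]
      have hgT : ω ∉ T := by simp [hTdef]; exact ne_of_lt hlt
      have : g ω = 0 := by simp [hgdef, Set.indicator_of_notMem hgS, Set.indicator_of_notMem hgT]
      rw [this]
      rcases hH01 ω with ⟨h0, _⟩
      have h2 : 0 ≤ H ω * (q - η ω) := mul_nonneg h0 (by linarith)
      nlinarith
    · simp [heq]
    · have hgS : ω ∈ S := by simp [hSdef]; exact hgt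
      have hgT : ω ∉ T := by simp [hTdef]; exact ne_of_gt hgt
      have : g ω = 1 := by simp [hgdef, Set.indicator_of_mem hgS, Set.indicator_of_notMem hgT]
      rw [this]
      rcases hH01 ω with ⟨_, h1⟩
      exact mul_nonneg (by linarith) (by linarith)
  -- expand the integral
  have hexp : (fun ω => (g ω - H ω) * (η ω - q)) =
      fun ω => (η ω * g ω - η ω * H ω) - q * (g ω - H ω) := by
    funext ω; ring
  rw [hexp] at hkey
  have e0 : ∫ ω, (η ω * g ω - η ω * H ω - q * (g ω - H ω)) ∂P =
      (∫ ω, (η ω * g ω - η ω * H ω) ∂P) - ∫ ω, q * (g ω - H ω) ∂P :=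
    integral_sub (hint_ηg.sub hint_ηH) ((hint_g.sub hint_H).const_mul q)
  have e1 : ∫ ω, (η ω * g ω - η ω * H ω) ∂P =
      (∫ ω, η ω * g ω ∂P) - ∫ ω, η ω * H ω ∂P := integral_sub hint_ηg hint_ηH
  have e2 : ∫ ω, (g ω - H ω) ∂P = (∫ ω, g ω ∂P) - ∫ ω, H ω ∂P :=
    integral_sub hint_g hint_H
  have e3 : ∫ ω, q * (g ω - H ω) ∂P = q * ∫ ω, (g ω - H ω) ∂P :=
    integral_const_mul q _
  rw [e0, e1, e3, e2, hgα, hHα, sub_self, mul_zero, sub_zero, sub_nonneg] at hkey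
  -- conclude
  have hPA : (0:ℝ) < (P A).toReal := ENNReal.toReal_pos hA0.ne' (measure_ne_top P A)
  have hgoal : ∫ ω, Hq P η α q ω * A.indicator (fun _ => (1:ℝ)) ω ∂P
      = ∫ ω, g ω * A.indicator (fun _ => (1:ℝ)) ω ∂P := by
    exact integral_congr_ae (ae_of_all _ fun ω => by simp only [hgeq])
  rw [hgoal, hcond_g, hcond_H]
  gcongr
end

section
/- (Precision at the top) The RDC H_q maximizes precision among all RDCs with predicted positive rate exactly α: for every RDC H with E[H] = α, precision(H) ≤ precision(H_q), where precision(H) = E[H·1_A]/E[H]. -/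
open MeasureTheory Set

private lemma bdd_integrable' {Ω : Type*} [MeasurableSpace Ω] (P : Measure Ω) [IsFiniteMeasure P]
    {f : Ω → ℝ} (hf : Measurable f) {C : ℝ} (hC : ∀ ω, |f ω| ≤ C) : Integrable f P :=
  (integrable_const C).mono' hf.aestronglyMeasurable
    (ae_of_all _ (by simpa [Real.norm_eq_abs] using hC))


/-- precision at the top. `H_q` maximizes precision
`E[H·1_A]/E[H]` among all RDCs with predicted positive rate exactly `α`. -/
theorem Hq_max_precision
    {Ω : Type*} (ℋ : MeasurableSpace Ω) [𝒜 : MeasurableSpace Ω]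
    (P : Measure Ω) [IsProbabilityMeasure P] (hℋ : ℋ ≤ 𝒜)
    (A : Set Ω) (hA : MeasurableSet A) (hA0 : 0 < P A) (hA1 : P A < 1)
    (hAH : ¬ MeasurableSet[ℋ] A)
    (η : Ω → ℝ) (hηm : Measurable[ℋ] η) (hη01 : ∀ ω, η ω ∈ Set.Icc (0 : ℝ) 1)
    (hηcond : ∀ Z : Ω → ℝ, Measurable[ℋ] Z → (∃ C, ∀ ω, |Z ω| ≤ C) →
      ∫ ω, η ω * Z ω ∂P = ∫ ω, A.indicator (fun _ => (1 : ℝ)) ω * Z ω ∂P)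
    (α : ℝ) (hα : α ∈ Set.Ioo (0 : ℝ) 1)
    (q : ℝ) (hq₁ : (P {ω | η ω < q}).toReal ≤ 1 - α)
    (hq₂ : 1 - α ≤ (P {ω | η ω ≤ q}).toReal)
 :
    ∀ H : Ω → ℝ, IsRDC ℋ H → ∫ ω, H ω ∂P = α →
      (∫ ω, H ω * A.indicator (fun _ => (1 : ℝ)) ω ∂P) / (∫ ω, H ω ∂P)
        ≤ (∫ ω, Hq P η α q ω * A.indicator (fun _ => (1 : ℝ)) ω ∂P)
            / (∫ ω, Hq P η α q ω ∂P) := by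
  rintro H ⟨hHm, hH01⟩ hHα
  -- basic measurability
  have hηM : Measurable η := hηm.mono hℋ le_rfl
  have hHM : Measurable H := hHm.mono hℋ le_rfl
  have hSgH : MeasurableSet[ℋ] {ω | η ω > q} := measurableSet_lt measurable_const hηm
  have hSeH : MeasurableSet[ℋ] {ω | η ω = q} := hηm (measurableSet_singleton q)
  have hSg : MeasurableSet {ω | η ω > q} := hℋ _ hSgH
  have hSe : MeasurableSet {ω | η ω = q} := hℋ _ hSeH
  set c : ℝ := (α - (P {ω' | η ω' > q}).toReal) / (P {ω' | η ω' = q}).toReal with hc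
  set G : Ω → ℝ := Hq P η α q with hGdef
  -- values of G
  have hGgt : ∀ ω, η ω > q → G ω = 1 := by
    intro ω hω
    have h1 : ({ω' | η ω' > q}).indicator (fun _ => (1:ℝ)) ω = 1 :=
      Set.indicator_of_mem (show ω ∈ {ω' | η ω' > q} from hω) _
    have h2 : ({ω' | η ω' = q}).indicator (fun _ => (1:ℝ)) ω = 0 :=
      Set.indicator_of_notMem (show ω ∉ {ω' | η ω' = q} by simp only [Set.mem_setOf_eq]; intro h; linarith) _
    simp only [hGdef, Hq]
    split_ifs <;> simp [h1, h2]
  have hGlt : ∀ ω, η ω < q → G ω = 0 := by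
    intro ω hω
    have h1 : ({ω' | η ω' > q}).indicator (fun _ => (1:ℝ)) ω = 0 :=
      Set.indicator_of_notMem (show ω ∉ {ω' | η ω' > q} by simp only [Set.mem_setOf_eq, not_lt]; linarith) _
    have h2 : ({ω' | η ω' = q}).indicator (fun _ => (1:ℝ)) ω = 0 :=
      Set.indicator_of_notMem (show ω ∉ {ω' | η ω' = q} by simp only [Set.mem_setOf_eq]; intro h; linarith) _
    simp only [hGdef, Hq]
    split_ifs <;> simp [h1, h2]
  -- measurability of G
  have hGmH : Measurable[ℋ] G := by
    by_cases h : P {ω' | η ω' = q} = 0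
    · have hGeq : G = ({ω' | η ω' > q}).indicator (fun _ => (1:ℝ)) := by
        funext ω; simp only [hGdef, Hq, if_pos h]
      rw [hGeq]; exact measurable_const.indicator hSgH
    · have hGeq : G = fun ω => ({ω' | η ω' > q}).indicator (fun _ => (1:ℝ)) ω
          + c * ({ω' | η ω' = q}).indicator (fun _ => (1:ℝ)) ω := by
        funext ω; simp only [hGdef, Hq, if_neg h, hc]
      rw [hGeq]
      exact (measurable_const.indicator hSgH).add
        ((measurable_const.indicator hSeH).const_mul c)
  have hGM : Measurable G := hGmH.mono hℋ le_rfl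
  -- boundedness of G
  have hind01 : ∀ (S : Set Ω) (ω : Ω), S.indicator (fun _ => (1:ℝ)) ω = 0 ∨
      S.indicator (fun _ => (1:ℝ)) ω = 1 := by
    intro S ω; by_cases h : ω ∈ S
    · right; exact Set.indicator_of_mem h _
    · left; exact Set.indicator_of_notMem h _
  have hGbd : ∀ ω, |G ω| ≤ 1 + |c| := by
    intro ω
    simp only [hGdef, Hq]
    split_ifs with h
    · rcases hind01 {ω' | η ω' > q} ω with h1 | h1 <;> rw [h1] <;>
        simp <;> linarith [abs_nonneg c]
    · rcases hind01 {ω' | η ω' > q} ω with h1 | h1 <;>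
        rcases hind01 {ω' | η ω' = q} ω with h2 | h2 <;> rw [h1, h2] <;>
        · rw [abs_le]
          constructor <;> nlinarith [abs_nonneg c, le_abs_self c, neg_abs_le c]
  -- integrabilities
  have hHbd : ∀ ω, |H ω| ≤ 1 := fun ω => abs_le.2 ⟨by linarith [(hH01 ω).1], (hH01 ω).2⟩
  have hηbd : ∀ ω, |η ω| ≤ 1 := fun ω => abs_le.2 ⟨by linarith [(hη01 ω).1], (hη01 ω).2⟩
  have intH : Integrable H P := bdd_integrable' P hHM hHbd
  have intG : Integrable G P := bdd_integrable' P hGM hGbd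
  have intHη : Integrable (fun ω => H ω * η ω) P := by
    apply bdd_integrable' P (hHM.mul hηM) (C := 1)
    intro ω
    rw [Pi.mul_apply, abs_mul]
    have := mul_le_mul (hHbd ω) (hηbd ω) (abs_nonneg _) zero_le_one
    linarith
  have intGη : Integrable (fun ω => G ω * η ω) P := by
    apply bdd_integrable' P (hGM.mul hηM) (C := 1 + |c|)
    intro ω
    rw [Pi.mul_apply, abs_mul]
    have h0 : (0:ℝ) ≤ 1 + |c| := by positivity
    have := mul_le_mul (hGbd ω) (hηbd ω) (abs_nonneg _) h0
    linarith
  -- measure arithmetic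
  set l : ℝ := (P {ω | η ω < q}).toReal with hl
  set e : ℝ := (P {ω | η ω = q}).toReal with he
  set g : ℝ := (P {ω | η ω > q}).toReal with hg
  have hle_meas : P {ω | η ω ≤ q} = P {ω | η ω < q} + P {ω | η ω = q} := by
    rw [← measure_union (by
      intro s hs1 hs2 ω hω
      have := hs1 hω; have := hs2 hω
      simp only [Set.mem_setOf_eq] at *
      exact absurd ‹η ω = q› (ne_of_lt ‹η ω < q›)) hSe]
    congr 1
    ext ω; simp [le_iff_lt_or_eq]
  have hcompl : {ω | η ω ≤ q}ᶜ = {ω | η ω > q} := by ext ω; simp [not_le]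
  have hgc : P {ω | η ω > q} = 1 - P {ω | η ω ≤ q} := by
    rw [← hcompl, measure_compl (measurableSet_le hηM measurable_const) (measure_ne_top _ _),
      measure_univ]
  have hfin : ∀ s : Set Ω, P s ≠ ⊤ := fun s => measure_ne_top _ _
  have hleR : (P {ω | η ω ≤ q}).toReal = l + e := by
    rw [hle_meas, ENNReal.toReal_add (hfin _) (hfin _)]
  have hgR : g = 1 - (l + e) := by
    rw [hg, hgc, ENNReal.toReal_sub_of_le prob_le_one (by simp), ← hleR]; simp
  have hone : (fun _ : Ω => (1:ℝ)) = (1 : Ω → ℝ) := rfl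
  -- ∫ G = α
  have hGα : ∫ ω, G ω ∂P = α := by
    by_cases h : P {ω' | η ω' = q} = 0
    · have he0 : e = 0 := by rw [he]; simp [h]
      have hla : l = 1 - α := le_antisymm hq₁ (by rw [hleR, he0, add_zero] at hq₂; exact hq₂)
      have hgα : g = α := by rw [hgR, hla, he0]; ring
      simp only [hGdef, Hq, h, if_true, hone]
      rw [MeasureTheory.integral_indicator_one hSg]
      exact hgα
    · have heR : e ≠ 0 := by
        rw [he]; exact ENNReal.toReal_ne_zero.2 ⟨h, hfin _⟩
      simp only [hGdef, Hq, h, if_false]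
      have hcoef : (α - (P {ω' | η ω' > q}).toReal) / (P {ω' | η ω' = q}).toReal = c := rfl
      simp only [hcoef]
      have int1 : Integrable (({ω' | η ω' > q}).indicator (fun _ => (1:ℝ))) P :=
        bdd_integrable' P (measurable_const.indicator hSg) (C := 1)
          (fun ω => by rcases hind01 _ ω with h1|h1 <;> rw [h1] <;> simp)
      have int2 : Integrable (({ω' | η ω' = q}).indicator (fun _ => (1:ℝ))) P :=
        bdd_integrable' P (measurable_const.indicator hSe) (C := 1)
          (fun ω => by rcases hind01 _ ω with h1|h1 <;> rw [h1] <;> simp)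
      rw [integral_add int1 (int2.const_mul c), integral_const_mul c _]
      simp only [hone]
      rw [MeasureTheory.integral_indicator_one hSg, MeasureTheory.integral_indicator_one hSe]
      rw [measureReal_def, measureReal_def, ← hg, ← he, hc]
      field_simp
      ring
  -- the key inequality ∫ H η ≤ ∫ G η
  have hkey : ∫ ω, H ω * η ω ∂P ≤ ∫ ω, G ω * η ω ∂P := by
    have hpt : ∀ ω, 0 ≤ (G ω - H ω) * (η ω - q) := by
      intro ω
      rcases lt_trichotomy (η ω) q with h | h | h
      · rw [hGlt ω h]
        have := (hH01 ω).1
        nlinarith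
      · rw [h]; simp
      · rw [hGgt ω h]
        have := (hH01 ω).2
        nlinarith
    have hint : (0:ℝ) ≤ ∫ ω, (G ω - H ω) * (η ω - q) ∂P := integral_nonneg hpt
    have hexp : ∫ ω, (G ω - H ω) * (η ω - q) ∂P
        = (∫ ω, G ω * η ω ∂P - ∫ ω, H ω * η ω ∂P)
          - q * (∫ ω, G ω ∂P - ∫ ω, H ω ∂P) := by
      have : ∀ ω, (G ω - H ω) * (η ω - q)
          = (G ω * η ω - H ω * η ω) - q * (G ω - H ω) := fun ω => by ring
      simp_rw [this]
      have int3 : Integrable (fun ω => G ω * η ω - H ω * η ω) P := intGη.sub intHη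
      have int4 : Integrable (fun ω => q * (G ω - H ω)) P := (intG.sub intH).const_mul q
      rw [integral_sub int3 int4, integral_sub intGη intHη,
        integral_const_mul q _, integral_sub intG intH]
    rw [hexp, hGα, hHα] at hint
    linarith
  -- conditional expectation translations
  have hcondH : ∫ ω, η ω * H ω ∂P = ∫ ω, A.indicator (fun _ => (1:ℝ)) ω * H ω ∂P :=
    hηcond H hHm ⟨1, hHbd⟩
  have hcondG : ∫ ω, η ω * G ω ∂P = ∫ ω, A.indicator (fun _ => (1:ℝ)) ω * G ω ∂P :=
    hηcond G hGmH ⟨1 + |c|, hGbd⟩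
  have hnum : ∫ ω, H ω * A.indicator (fun _ => (1:ℝ)) ω ∂P
      ≤ ∫ ω, G ω * A.indicator (fun _ => (1:ℝ)) ω ∂P := by
    calc ∫ ω, H ω * A.indicator (fun _ => (1:ℝ)) ω ∂P
        = ∫ ω, A.indicator (fun _ => (1:ℝ)) ω * H ω ∂P := by simp_rw [mul_comm]
      _ = ∫ ω, η ω * H ω ∂P := hcondH.symm
      _ = ∫ ω, H ω * η ω ∂P := by simp_rw [mul_comm]
      _ ≤ ∫ ω, G ω * η ω ∂P := hkey
      _ = ∫ ω, η ω * G ω ∂P := by simp_rw [mul_comm]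
      _ = ∫ ω, A.indicator (fun _ => (1:ℝ)) ω * G ω ∂P := hcondG
      _ = ∫ ω, G ω * A.indicator (fun _ => (1:ℝ)) ω ∂P := by simp_rw [mul_comm]
  rw [hHα, hGα]
  exact (div_le_div_iff_of_pos_right hα.1).mpr hnum
end
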